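/- For every irreducible fraction p/q with 0 < p/q < 1 and every natural number k, m(k, p/q) = m(k, (q−p)/q); equivalently the degree distributions of the Haros graphs G_{p/q} and G_{1−p/q} coincide: P(k, p/q) = P(k, 1 − p/q) for all k. -/

import Mathlib

/-- Symbols for paths in the Farey binary tree. -/
inductive LR
  | L
  | R
deriving DecidableEq

/-- One step in the Farey binary tree: update the current pair of fractions
(represented as pairs (numerator, denominator) of naturals). -/
def fareyStep : ((ℕ × ℕ) × (ℕ × ℕ)) → LR → ((ℕ × ℕ) × (ℕ × ℕ))
  | ((a, b), (c, d)), LR.L => ((a, b), (a + c, b + d))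
  | ((a, b), (c, d)), LR.R => ((a + c, b + d), (c, d))

/-- The final pair of fractions of a word: after reading the first symbol `L`
the current pair is (0/1, 1/1); the remaining symbols update it. -/
def finalPair (w : List LR) : (ℕ × ℕ) × (ℕ × ℕ) :=
  w.tail.foldl fareyStep ((0, 1), (1, 1))

/-- The value ⟨w⟩ of a word: the mediant of its final pair, as (numerator, denominator). -/
def value (w : List LR) : ℕ × ℕ :=
  ((finalPair w).1.1 + (finalPair w).2.1, (finalPair w).1.2 + (finalPair w).2.2)

/-- A word over {L,R} is a Farey word when its first symbol is `L`. -/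
def IsFareyWord (w : List LR) : Prop := w.head? = some LR.L

/-- Concatenation of degree sequences:
[a₁,…,a_s] ⊕ [b₁,…,b_t] = [a₁+1, a₂, …, a_{s−1}, a_s+b₁, b₂, …, b_{t−1}, b_t+1]. -/
def oplus (A B : List ℕ) : List ℕ :=
  (A.dropLast.modifyHead (· + 1)) ++ [A.getLastD 0 + B.headD 0] ++ B.tail.dropLast
    ++ [B.getLastD 0 + 1]

/-- Update of the pair (D(left ancestor), D(right ancestor)) of unreduced degree
sequences along one symbol. -/
def degStep : (List ℕ × List ℕ) → LR → (List ℕ × List ℕ)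
  | (A, B), LR.L => (A, oplus A B)
  | (A, B), LR.R => (oplus A B, B)

/-- The pair (D(a/b), D(c/d)) of unreduced degree sequences of the final pair of a word;
0/1 and 1/1 are both assigned the list [1,1]. -/
def degPair (w : List LR) : List ℕ × List ℕ :=
  w.tail.foldl degStep ([1, 1], [1, 1])

/-- The unreduced degree sequence D(⟨w⟩) = D(a/b) ⊕ D(c/d) of the value of a word. -/
def Dseq (w : List LR) : List ℕ :=
  oplus (degPair w).1 (degPair w).2

/-- Reduction: [k₁,…,k_{q+1}] becomes [k₂,…,k_q, k₁+k_{q+1}]; the last entry is the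
boundary degree and the remaining ones are the inner degrees. -/
def reduce (D : List ℕ) : List ℕ :=
  D.tail.dropLast ++ [D.headD 0 + D.getLastD 0]

/-- The reduced degree sequence of the Haros graph G_{⟨w⟩}. -/
def degSeq (w : List LR) : List ℕ := reduce (Dseq w)

/-- Degree-distribution entropy S of the Haros graph G_{⟨w⟩}:
S = −Σ_k P(k)·ln P(k), summed over the degree values occurring in the reduced
degree sequence, where P(k) = m(k)/q. -/
noncomputable def Sent (w : List LR) : ℝ :=
  -∑ k ∈ (degSeq w).toFinset,
    (((degSeq w).count k : ℝ) / ((value w).2 : ℝ)) *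
      Real.log (((degSeq w).count k : ℝ) / ((value w).2 : ℝ))

/-- Reduced entropy H of the Haros graph G_{⟨w⟩} (with the convention 0·ln 0 = 0,
automatic since Real.log 0 = 0). -/
noncomputable def Hent (w : List LR) : ℝ :=
  let x : ℝ := ((value w).1 : ℝ) / ((value w).2 : ℝ)
  if x ≤ 1 / 2 then
    Sent w + 2 * x * Real.log x + (1 - 2 * x) * Real.log (1 - 2 * x)
  else
    Sent w + 2 * (1 - x) * Real.log (1 - x) + (2 * x - 1) * Real.log (2 * x - 1)



def swapLR : LR → LR
  | LR.L => LR.R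
  | LR.R => LR.L

def sigmaP (P : (ℕ × ℕ) × (ℕ × ℕ)) : (ℕ × ℕ) × (ℕ × ℕ) :=
  ((P.2.2 - P.2.1, P.2.2), (P.1.2 - P.1.1, P.1.2))

def FInv (P : (ℕ × ℕ) × (ℕ × ℕ)) : Prop :=
  P.1.2 * P.2.1 = P.1.1 * P.2.2 + 1 ∧ P.1.1 < P.1.2 ∧ P.2.1 ≤ P.2.2

lemma inv_step {P : (ℕ × ℕ) × (ℕ × ℕ)} (h : FInv P) (s : LR) : FInv (fareyStep P s) := by
  obtain ⟨⟨a, b⟩, ⟨c, d⟩⟩ := P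
  obtain ⟨h1, h2, h3⟩ := h
  cases s <;> simp only [fareyStep, FInv] at *
  · refine ⟨?_, h2, by omega⟩
    rw [Nat.mul_add, Nat.mul_add, h1]; ring
  · refine ⟨?_, by omega, h3⟩
    rw [Nat.add_mul, Nat.add_mul, h1]; ring

lemma inv_fold {P : (ℕ × ℕ) × (ℕ × ℕ)} (h : FInv P) (t : List LR) :
    FInv (t.foldl fareyStep P) := by
  induction t generalizing P with
  | nil => exact h
  | cons s t ih => exact ih (inv_step h s)

def valFrom (P : (ℕ × ℕ) × (ℕ × ℕ)) (t : List LR) : ℕ × ℕ :=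
  ((t.foldl fareyStep P).1.1 + (t.foldl fareyStep P).2.1,
   (t.foldl fareyStep P).1.2 + (t.foldl fareyStep P).2.2)

lemma between {P : (ℕ × ℕ) × (ℕ × ℕ)} (h : FInv P) (t : List LR) :
    P.1.1 * (valFrom P t).2 < (valFrom P t).1 * P.1.2 ∧
      (valFrom P t).1 * P.2.2 < P.2.1 * (valFrom P t).2 := by
  induction t generalizing P with
  | nil =>
    obtain ⟨⟨a, b⟩, ⟨c, d⟩⟩ := P
    obtain ⟨h1, h2, h3⟩ := h
    simp only [valFrom, List.foldl] at *
    constructor <;> nlinarith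
  | cons s t ih =>
    have hstep := inv_step h s
    have H := ih hstep
    obtain ⟨⟨a, b⟩, ⟨c, d⟩⟩ := P
    have hv : valFrom ((a, b), (c, d)) (s :: t) = valFrom (fareyStep ((a, b), (c, d)) s) t := rfl
    rw [hv]
    set V := valFrom (fareyStep ((a, b), (c, d)) s) t with hV
    obtain ⟨h1, h2, h3⟩ := h
    cases s <;> simp only [fareyStep] at H ⊢
    · obtain ⟨H1, H2⟩ := H
      refine ⟨H1, ?_⟩
      nlinarith
    · obtain ⟨H1, H2⟩ := H
      refine ⟨?_, H2⟩
      nlinarith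

lemma valFrom_cons (P : (ℕ × ℕ) × (ℕ × ℕ)) (s : LR) (t : List LR) :
    valFrom P (s :: t) = valFrom (fareyStep P s) t := rfl

lemma val_inj {P : (ℕ × ℕ) × (ℕ × ℕ)} (h : FInv P) (t t' : List LR)
    (he : valFrom P t = valFrom P t') : t = t' := by
  induction t generalizing P t' with
  | nil =>
    cases t' with
    | nil => rfl
    | cons s r =>
      exfalso
      obtain ⟨⟨a, b⟩, ⟨c, d⟩⟩ := P
      have hstep := inv_step h s
      have H := between hstep r
      rw [valFrom_cons] at he
      cases s <;>
        simp only [fareyStep] at H he <;>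
        rw [← he] at H <;>
        simp only [valFrom, List.foldl] at H <;> omega
  | cons s r ih =>
    cases t' with
    | nil =>
      exfalso
      obtain ⟨⟨a, b⟩, ⟨c, d⟩⟩ := P
      have hstep := inv_step h s
      have H := between hstep r
      rw [valFrom_cons] at he
      cases s <;>
        simp only [fareyStep] at H he <;>
        rw [he] at H <;>
        simp only [valFrom, List.foldl] at H <;> omega
    | cons s' r' =>
      obtain ⟨⟨a, b⟩, ⟨c, d⟩⟩ := P
      rw [valFrom_cons, valFrom_cons] at he
      cases s <;> cases s'
      · rw [ih (inv_step h LR.L) r' he]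
      · exfalso
        have H := (between (inv_step h LR.L) r).2
        have H' := (between (inv_step h LR.R) r').1
        rw [he] at H
        simp only [fareyStep] at H H'
        nlinarith
      · exfalso
        have H := (between (inv_step h LR.R) r).1
        have H' := (between (inv_step h LR.L) r').2
        rw [he] at H
        simp only [fareyStep] at H H'
        nlinarith
      · rw [ih (inv_step h LR.R) r' he]

lemma sigma_step {P : (ℕ × ℕ) × (ℕ × ℕ)} (h : FInv P) (s : LR) :
    fareyStep (sigmaP P) (swapLR s) = sigmaP (fareyStep P s) := by
  obtain ⟨⟨a, b⟩, ⟨c, d⟩⟩ := P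
  obtain ⟨h1, h2, h3⟩ := h
  simp only [FInv] at h2 h3
  clear h1
  cases s <;>
    simp only [fareyStep, sigmaP, swapLR, Prod.mk.injEq, and_true, true_and] <;> omega

lemma sigma_fold {P : (ℕ × ℕ) × (ℕ × ℕ)} (h : FInv P) (t : List LR) :
    (t.map swapLR).foldl fareyStep (sigmaP P) = sigmaP (t.foldl fareyStep P) := by
  induction t generalizing P with
  | nil => rfl
  | cons s t ih =>
    simp only [List.map_cons, List.foldl_cons, sigma_step h s]
    exact ih (inv_step h s)

/- degree-sequence side -/

lemma exists_decomp {l : List ℕ} (h : 2 ≤ l.length) :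
    ∃ a m a', l = a :: (m ++ [a']) := by
  match l, h with
  | a :: (b :: r), _ =>
    refine ⟨a, (b :: r).dropLast, (b :: r).getLast (by simp), ?_⟩
    rw [List.dropLast_append_getLast]

lemma oplus_decomp (a a' b b' : ℕ) (as bs : List ℕ) :
    oplus (a :: (as ++ [a'])) (b :: (bs ++ [b'])) =
      (a + 1) :: (as ++ (a' + b) :: (bs ++ [b' + 1])) := by
  have e1 : (a :: (as ++ [a'])) = ((a :: as) ++ [a'] : List ℕ) := by simp
  have e2 : (bs ++ [b'] : List ℕ).dropLast = bs := List.dropLast_concat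
  simp only [oplus, List.tail_cons, List.headD_cons, e2]
  rw [e1]
  simp only [List.dropLast_concat, List.getLastD_concat, List.modifyHead,
    List.getLastD_eq_getLast?, List.getLast?_concat, Option.getD_some]
  have e3 : (b :: (bs ++ [b'])).getLast? = some b' := by
    rw [show (b :: (bs ++ [b'])) = ((b :: bs) ++ [b'] : List ℕ) from by simp]
    exact List.getLast?_concat
  rw [e3]
  simp

def revp (X : List ℕ × List ℕ) : List ℕ × List ℕ := (X.2.reverse, X.1.reverse)

lemma oplus_rev {A B : List ℕ} (hA : 2 ≤ A.length) (hB : 2 ≤ B.length) :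
    (oplus A B).reverse = oplus B.reverse A.reverse := by
  obtain ⟨a, as, a', rfl⟩ := exists_decomp hA
  obtain ⟨b, bs, b', rfl⟩ := exists_decomp hB
  rw [oplus_decomp]
  rw [show (a :: (as ++ [a'])).reverse = a' :: (as.reverse ++ [a]) from by simp,
      show (b :: (bs ++ [b'])).reverse = b' :: (bs.reverse ++ [b]) from by simp,
      oplus_decomp]
  simp [Nat.add_comm]

lemma oplus_len {A B : List ℕ} (hA : 2 ≤ A.length) (hB : 2 ≤ B.length) :
    2 ≤ (oplus A B).length := by
  obtain ⟨a, as, a', rfl⟩ := exists_decomp hA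
  obtain ⟨b, bs, b', rfl⟩ := exists_decomp hB
  rw [oplus_decomp]; simp; omega

lemma degStep_len {X : List ℕ × List ℕ} (h : 2 ≤ X.1.length ∧ 2 ≤ X.2.length) (s : LR) :
    2 ≤ (degStep X s).1.length ∧ 2 ≤ (degStep X s).2.length := by
  obtain ⟨A, B⟩ := X
  cases s <;> simp only [degStep] <;>
    exact ⟨by first | exact h.1 | exact oplus_len h.1 h.2,
           by first | exact h.2 | exact oplus_len h.1 h.2⟩

lemma deg_fold_len {X : List ℕ × List ℕ} (h : 2 ≤ X.1.length ∧ 2 ≤ X.2.length) (t : List LR) :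
    2 ≤ (t.foldl degStep X).1.length ∧ 2 ≤ (t.foldl degStep X).2.length := by
  induction t generalizing X with
  | nil => exact h
  | cons s t ih => exact ih (degStep_len h s)

lemma degStep_rev {X : List ℕ × List ℕ} (h : 2 ≤ X.1.length ∧ 2 ≤ X.2.length) (s : LR) :
    degStep (revp X) (swapLR s) = revp (degStep X s) := by
  obtain ⟨A, B⟩ := X
  cases s <;> simp only [degStep, revp, swapLR, Prod.mk.injEq]
  · exact ⟨(oplus_rev h.1 h.2).symm, trivial⟩
  · exact ⟨trivial, (oplus_rev h.1 h.2).symm⟩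

lemma deg_fold_rev {X : List ℕ × List ℕ} (h : 2 ≤ X.1.length ∧ 2 ≤ X.2.length) (t : List LR) :
    (t.map swapLR).foldl degStep (revp X) = revp (t.foldl degStep X) := by
  induction t generalizing X with
  | nil => rfl
  | cons s t ih =>
    simp only [List.map_cons, List.foldl_cons, degStep_rev h s]
    exact ih (degStep_len h s)

lemma reduce_decomp (x y : ℕ) (m : List ℕ) :
    reduce (x :: (m ++ [y])) = m ++ [x + y] := by
  have e3 : (x :: (m ++ [y])).getLast? = some y := by
    rw [show (x :: (m ++ [y])) = ((x :: m) ++ [y] : List ℕ) from by simp]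
    exact List.getLast?_concat
  simp [reduce, List.dropLast_concat, List.getLastD_eq_getLast?, e3]

lemma count_reduce_reverse {D : List ℕ} (h : 2 ≤ D.length) (k : ℕ) :
    (reduce D.reverse).count k = (reduce D).count k := by
  obtain ⟨x, m, y, rfl⟩ := exists_decomp h
  rw [show (x :: (m ++ [y])).reverse = y :: (m.reverse ++ [x]) from by simp,
      reduce_decomp, reduce_decomp]
  simp [List.count_append, List.count_reverse, Nat.add_comm]

/-- the degree distributions of the Haros graphs G_{p/q} and G_{(q−p)/q}
coincide: m(k, p/q) = m(k, (q−p)/q) for every k. -/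
theorem statement1 (p q : ℕ) (hcop : Nat.Coprime p q) (hp : 0 < p) (hpq : p < q)
    (w w' : List LR) (hw : IsFareyWord w) (hw' : IsFareyWord w')
    (hval : value w = (p, q)) (hval' : value w' = (q - p, q)) (k : ℕ) :
    (degSeq w).count k = (degSeq w').count k := by
  obtain ⟨t, rfl⟩ : ∃ t, w = LR.L :: t := by
    cases w with
    | nil => exact absurd hw (by simp [IsFareyWord])
    | cons s u =>
      cases s
      · exact ⟨u, rfl⟩
      · exact absurd hw (by simp [IsFareyWord])
  obtain ⟨t', rfl⟩ : ∃ u, w' = LR.L :: u := by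
    cases w' with
    | nil => exact absurd hw' (by simp [IsFareyWord])
    | cons s u =>
      cases s
      · exact ⟨u, rfl⟩
      · exact absurd hw' (by simp [IsFareyWord])
  have hP0 : FInv ((0, 1), (1, 1)) := ⟨by norm_num, by norm_num, le_refl 1⟩
  have hmfold : (t.map swapLR).foldl fareyStep ((0, 1), (1, 1)) =
      sigmaP (t.foldl fareyStep ((0, 1), (1, 1))) := by
    rw [show (((0, 1), (1, 1)) : (ℕ × ℕ) × (ℕ × ℕ)) = sigmaP ((0, 1), (1, 1)) from rfl]
    exact sigma_fold hP0 t
  have hfin := inv_fold hP0 t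
  simp only [FInv] at hfin
  obtain ⟨hQ1, hQ2, hQ3⟩ := hfin
  simp only [value, finalPair, List.tail_cons] at hval hval'
  have hvm : value (LR.L :: t.map swapLR) = (q - p, q) := by
    simp only [value, finalPair, List.tail_cons, hmfold, sigmaP]
    rw [Prod.mk.injEq] at hval ⊢
    omega
  have ht' : t' = t.map swapLR := by
    apply val_inj hP0
    have h2 : valFrom ((0, 1), (1, 1)) (t.map swapLR) = value (LR.L :: t.map swapLR) := rfl
    rw [h2, hvm]
    exact hval'
  subst ht'
  have hlen : 2 ≤ (([1, 1], [1, 1]) : List ℕ × List ℕ).1.length ∧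
      2 ≤ (([1, 1], [1, 1]) : List ℕ × List ℕ).2.length := by simp
  have hl := deg_fold_len hlen t
  have hdeg : degPair (LR.L :: t.map swapLR) = revp (degPair (LR.L :: t)) := by
    show (t.map swapLR).foldl degStep ([1, 1], [1, 1]) = _
    rw [show (([1, 1], [1, 1]) : List ℕ × List ℕ) = revp ([1, 1], [1, 1]) from rfl]
    exact deg_fold_rev hlen t
  have hD : Dseq (LR.L :: t.map swapLR) = (Dseq (LR.L :: t)).reverse := by
    show oplus (degPair (LR.L :: t.map swapLR)).1 (degPair (LR.L :: t.map swapLR)).2 = _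
    rw [hdeg]
    exact (oplus_rev hl.1 hl.2).symm
  have hDlen : 2 ≤ (Dseq (LR.L :: t)).length := oplus_len hl.1 hl.2
  show (reduce (Dseq (LR.L :: t))).count k = (reduce (Dseq (LR.L :: t.map swapLR))).count k
  rw [hD]
  exact (count_reduce_reverse hDlen k).symm
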